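/- Let $F:\mathbb{R}\to[0,\infty)$ be nondecreasing, left-continuous, with $\lim_{x\to-\infty}F(x)=0$ and $F_\infty=\lim_{x\to\infty}F(x)<\infty$. Suppose $F_{\Delta x}:\mathbb{R}\to[0,\infty)$ satisfies $F(x_{2j})\leq F_{\Delta x}(x)\leq F(x_{2j+2})$ and $F(x_{2j})\leq F(x)\leq F(x_{2j+2})$ for all $x\in(x_{2j},x_{2j+2}]$, where $x_j=j\Delta x$. Then $\|F-F_{\Delta x}\|_{L^1(\mathbb{R})}\leq 2F_\infty\Delta x$ and $\|F-F_{\Delta x}\|_{L^2(\mathbb{R})}\leq\sqrt{2}\,F_\infty\Delta x^{1/2}$. -/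

import Mathlib

open MeasureTheory Filter
open scoped ENNReal NNReal

lemma stmt4_tele (G : ℤ → ℝ) (m : ℤ) : ∀ n : ℤ, m ≤ n →
    ∑ j ∈ Finset.Icc m n, (G (j + 1) - G j) = G (n + 1) - G m := by
  refine Int.le_induction ?_ ?_
  · simp
  · intro n hmn ih
    have hins : Finset.Icc m (n + 1) = insert (n + 1) (Finset.Icc m n) := by
      ext k; simp only [Finset.mem_Icc, Finset.mem_insert]; omega
    have hnot : (n + 1) ∉ Finset.Icc m n := by simp
    rw [hins, Finset.sum_insert hnot, ih]
    ring

/-- `L^1`- and `L^2`-error estimates for a cell-wise sandwiched approximation `F_Δx`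
of a nondecreasing left-continuous cumulative energy function `F`. -/
theorem stmt4 (F FD : ℝ → ℝ) (Δx Finf : ℝ) (hΔx : 0 < Δx)
    (hFmono : Monotone F) (hFpos : ∀ x, 0 ≤ F x)
    (hFlc : ∀ x : ℝ, Tendsto F (nhdsWithin x (Set.Iio x)) (nhds (F x)))
    (hFbot : Tendsto F atBot (nhds 0))
    (hFtop : Tendsto F atTop (nhds Finf))
    (hFDpos : ∀ x, 0 ≤ FD x)
    (hsand : ∀ j : ℤ, ∀ x ∈ Set.Ioc ((2*(j:ℝ))*Δx) ((2*(j:ℝ)+2)*Δx),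
      F ((2*(j:ℝ))*Δx) ≤ FD x ∧ FD x ≤ F ((2*(j:ℝ)+2)*Δx)) :
    eLpNorm (fun x => F x - FD x) 1 volume ≤ ENNReal.ofReal (2 * Finf * Δx) ∧
    eLpNorm (fun x => F x - FD x) 2 volume
      ≤ ENNReal.ofReal (Real.sqrt 2 * Finf * Real.sqrt Δx) := by
  -- basic facts about `Finf`
  have hFle : ∀ x, F x ≤ Finf := fun x =>
    ge_of_tendsto hFtop (eventually_atTop.2 ⟨x, fun y hy => hFmono hy⟩)
  have hFinf0 : 0 ≤ Finf := le_trans (hFpos 0) (hFle 0)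
  -- cells, cell-wise oscillations
  set I : ℤ → Set ℝ := fun j => Set.Ioc ((2*(j:ℝ))*Δx) ((2*(j:ℝ)+2)*Δx) with hIdef
  set c : ℤ → ℝ≥0∞ :=
    fun j => ENNReal.ofReal (F ((2*(j:ℝ)+2)*Δx) - F ((2*(j:ℝ))*Δx)) with hcdef
  have hd0 : ∀ j : ℤ, 0 ≤ F ((2*(j:ℝ)+2)*Δx) - F ((2*(j:ℝ))*Δx) := by
    intro j
    have : (2*(j:ℝ))*Δx ≤ (2*(j:ℝ)+2)*Δx := by nlinarith
    linarith [hFmono this]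
  have hcFinf : ∀ j : ℤ, c j ≤ ENNReal.ofReal Finf := by
    intro j
    have h1 := hFle ((2*(j:ℝ)+2)*Δx)
    have h2 := hFpos ((2*(j:ℝ))*Δx)
    exact ENNReal.ofReal_le_ofReal (by linarith)
  -- each point lies in a cell
  have hcover : ∀ x : ℝ, ∃ j : ℤ, x ∈ I j := by
    intro x
    set t : ℝ := x / (2*Δx) with htdef
    have h2Δ : (0:ℝ) < 2*Δx := by linarith
    have hx : t * (2*Δx) = x := div_mul_cancel₀ x (ne_of_gt h2Δ)
    refine ⟨⌈t⌉ - 1, ?_, ?_⟩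
    · push_cast
      have h1 : (⌈t⌉:ℝ) < t + 1 := Int.ceil_lt_add_one t
      nlinarith
    · push_cast
      have h2 : t ≤ (⌈t⌉:ℝ) := Int.le_ceil t
      nlinarith
  -- cell-wise bound on the error
  have hcell : ∀ j : ℤ, ∀ x ∈ I j, (‖F x - FD x‖₊ : ℝ≥0∞) ≤ c j := by
    intro j x hx
    obtain ⟨h1, h2⟩ := hsand j x hx
    have h3 : F ((2*(j:ℝ))*Δx) ≤ F x := hFmono (le_of_lt hx.1)
    have h4 : F x ≤ F ((2*(j:ℝ)+2)*Δx) := hFmono hx.2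
    rw [← enorm_eq_nnnorm, Real.enorm_eq_ofReal_abs]
    exact ENNReal.ofReal_le_ofReal (abs_sub_le_iff.2 ⟨by linarith, by linarith⟩)
  -- the sum of oscillations is at most `Finf` (telescoping)
  have hsum : ∑' j, c j ≤ ENNReal.ofReal Finf := by
    rw [ENNReal.tsum_eq_iSup_sum]
    refine iSup_le fun s => ?_
    set N : ℤ := ((s.sup fun j => j.natAbs : ℕ) : ℤ) with hN
    have hN0 : (0:ℤ) ≤ N := Int.ofNat_nonneg _
    have hsub : s ⊆ Finset.Icc (-N) N := by
      intro j hj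
      have : j.natAbs ≤ (s.sup fun j => j.natAbs) := Finset.le_sup hj
      simp only [Finset.mem_Icc]
      omega
    calc ∑ j ∈ s, c j ≤ ∑ j ∈ Finset.Icc (-N) N, c j :=
          Finset.sum_le_sum_of_subset hsub
      _ = ENNReal.ofReal (∑ j ∈ Finset.Icc (-N) N,
            (F ((2*(j:ℝ)+2)*Δx) - F ((2*(j:ℝ))*Δx))) := by
          rw [ENNReal.ofReal_sum_of_nonneg (fun j _ => hd0 j)]
      _ ≤ ENNReal.ofReal Finf := by
          apply ENNReal.ofReal_le_ofReal
          have htel := stmt4_tele (fun j : ℤ => F ((2*(j:ℝ))*Δx)) (-N) N (by omega)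
          have hrw : ∑ j ∈ Finset.Icc (-N) N, (F ((2*(j:ℝ)+2)*Δx) - F ((2*(j:ℝ))*Δx))
              = ∑ j ∈ Finset.Icc (-N) N, (F ((2*(((j+1:ℤ)):ℝ))*Δx) - F ((2*(j:ℝ))*Δx)) := by
            refine Finset.sum_congr rfl fun j _ => ?_
            congr 2
            push_cast
            ring
          rw [hrw, htel]
          have h1 := hFle ((2*(((N+1:ℤ)):ℝ))*Δx)
          have h2 := hFpos ((2*((-N:ℤ):ℝ))*Δx)
          linarith
  -- volume of each cell
  have hvol : ∀ j : ℤ, volume (I j) = ENNReal.ofReal (2*Δx) := by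
    intro j
    rw [hIdef]
    simp only [Real.volume_Ioc]
    congr 1
    ring
  have hmeas : ∀ j : ℤ, MeasurableSet (I j) := fun j => measurableSet_Ioc
  -- L¹ bound
  have hL1 : eLpNorm (fun x => F x - FD x) 1 volume ≤ ENNReal.ofReal (2 * Finf * Δx) := by
    rw [eLpNorm_one_eq_lintegral_enorm]
    calc ∫⁻ x, (‖F x - FD x‖₊ : ℝ≥0∞)
        ≤ ∫⁻ x, ∑' j, (I j).indicator (fun _ => c j) x := by
          refine lintegral_mono fun x => ?_
          obtain ⟨j, hj⟩ := hcover x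
          refine le_trans ?_ (ENNReal.le_tsum j)
          rw [Set.indicator_of_mem hj]
          exact hcell j x hj
      _ = ∑' j, ∫⁻ x, (I j).indicator (fun _ => c j) x := by
          refine lintegral_tsum fun j => ?_
          exact (measurable_const.indicator (hmeas j)).aemeasurable
      _ = ∑' j, c j * ENNReal.ofReal (2*Δx) := by
          refine tsum_congr fun j => ?_
          rw [lintegral_indicator_const (hmeas j), hvol j]
      _ = (∑' j, c j) * ENNReal.ofReal (2*Δx) := by rw [ENNReal.tsum_mul_right]
      _ ≤ ENNReal.ofReal Finf * ENNReal.ofReal (2*Δx) :=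
          by gcongr
      _ = ENNReal.ofReal (2 * Finf * Δx) := by
          rw [← ENNReal.ofReal_mul hFinf0]
          congr 1
          ring
  refine ⟨hL1, ?_⟩
  -- L² bound
  have h2 : eLpNorm (fun x => F x - FD x) 2 volume
      = (∫⁻ x, (‖F x - FD x‖₊ : ℝ≥0∞) ^ (2:ℝ)) ^ (1/(2:ℝ)) := by
    rw [eLpNorm_eq_lintegral_rpow_enorm_toReal (by norm_num) (by norm_num)]
    norm_num
    rfl
  rw [h2]
  have hint : (∫⁻ x, (‖F x - FD x‖₊ : ℝ≥0∞) ^ (2:ℝ))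
      ≤ ENNReal.ofReal (2 * Finf^2 * Δx) := by
    calc ∫⁻ x, (‖F x - FD x‖₊ : ℝ≥0∞) ^ (2:ℝ)
        ≤ ∫⁻ x, ∑' j, (I j).indicator (fun _ => c j * c j) x := by
          refine lintegral_mono fun x => ?_
          obtain ⟨j, hj⟩ := hcover x
          refine le_trans ?_ (ENNReal.le_tsum j)
          rw [Set.indicator_of_mem hj]
          calc (‖F x - FD x‖₊ : ℝ≥0∞) ^ (2:ℝ) ≤ (c j) ^ (2:ℝ) :=
                ENNReal.rpow_le_rpow (hcell j x hj) (by norm_num)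
            _ = c j * c j := by
                rw [show (2:ℝ) = ((2:ℕ):ℝ) by norm_num, ENNReal.rpow_natCast]
                ring
      _ = ∑' j, ∫⁻ x, (I j).indicator (fun _ => c j * c j) x := by
          refine lintegral_tsum fun j => ?_
          exact (measurable_const.indicator (hmeas j)).aemeasurable
      _ = ∑' j, (c j * c j) * ENNReal.ofReal (2*Δx) := by
          refine tsum_congr fun j => ?_
          rw [lintegral_indicator_const (hmeas j), hvol j]
      _ ≤ ∑' j, (ENNReal.ofReal Finf * c j) * ENNReal.ofReal (2*Δx) := by
          refine ENNReal.tsum_le_tsum fun j => ?_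
          gcongr
          exact hcFinf j
      _ = ENNReal.ofReal Finf * (∑' j, c j) * ENNReal.ofReal (2*Δx) := by
          rw [ENNReal.tsum_mul_right, ENNReal.tsum_mul_left]
      _ ≤ ENNReal.ofReal Finf * ENNReal.ofReal Finf * ENNReal.ofReal (2*Δx) :=
          by gcongr
      _ = ENNReal.ofReal (2 * Finf^2 * Δx) := by
          rw [← ENNReal.ofReal_mul hFinf0, ← ENNReal.ofReal_mul (by positivity)]
          congr 1
          ring
  calc (∫⁻ x, (‖F x - FD x‖₊ : ℝ≥0∞) ^ (2:ℝ)) ^ (1/(2:ℝ))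
      ≤ (ENNReal.ofReal (2 * Finf^2 * Δx)) ^ (1/(2:ℝ)) :=
        ENNReal.rpow_le_rpow hint (by norm_num)
    _ = ENNReal.ofReal ((2 * Finf^2 * Δx) ^ (1/(2:ℝ))) := by
        rw [ENNReal.ofReal_rpow_of_nonneg (by positivity) (by norm_num)]
    _ = ENNReal.ofReal (Real.sqrt 2 * Finf * Real.sqrt Δx) := by
        congr 1
        rw [← Real.sqrt_eq_rpow]
        rw [show 2 * Finf^2 * Δx = (Real.sqrt 2 * Finf * Real.sqrt Δx)^2 by
          rw [mul_pow, mul_pow, Real.sq_sqrt (by norm_num), Real.sq_sqrt hΔx.le]]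
        exact Real.sqrt_sq (by positivity)
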